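/- Let K be a sesqui-analytic positive definite kernel on the unit ball 𝔹ᵐ ⊆ ℂᵐ normalized at the origin (K(z,0) = 1 for all z), and suppose B_m⁻¹·K is non-negative definite, where B_m(z,w) = 1/(1 − ⟨z,w⟩). Then K − B_m is a non-negative definite kernel on 𝔹ᵐ. -/

import Mathlib

open scoped ComplexOrder InnerProductSpace

/-- A scalar kernel on a set `s` is non-negative definite. -/
def IsNNDOn {X : Type*} (s : Set X) (K : X → X → ℂ) : Prop :=
  ∀ (p : ℕ) (x : Fin p → X), (∀ i, x i ∈ s) →
    Matrix.PosSemidef (Matrix.of fun i j : Fin p => K (x i) (x j))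

/-- A scalar kernel on a set `s` is positive definite. -/
def IsPDOn {X : Type*} (s : Set X) (K : X → X → ℂ) : Prop :=
  ∀ (p : ℕ) (x : Fin p → X), (∀ i, x i ∈ s) → Function.Injective x →
    Matrix.PosDef (Matrix.of fun i j : Fin p => K (x i) (x j))

/-- `K` is sesqui-analytic on `s`. -/
def Sesq {E : Type*} [NormedAddCommGroup E] [NormedSpace ℂ E] (s : Set E)
    (K : E → E → ℂ) : Prop :=
  (∀ w ∈ s, AnalyticOnNhd ℂ (fun z => K z w) s) ∧
    (∀ z ∈ s, AnalyticOnNhd ℂ (fun w => (starRingEnd ℂ) (K z w)) s)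

lemma hadamard_gram_psd {p : ℕ} {ι : Type*} [Fintype ι] (F : Fin p → ι → ℂ)
    {C : Matrix (Fin p) (Fin p) ℂ} (hC : C.PosSemidef) :
    Matrix.PosSemidef (Matrix.of fun i j =>
      (∑ k, F i k * (starRingEnd ℂ) (F j k)) * C i j) := by
  refine Matrix.posSemidef_iff_dotProduct_mulVec.mpr ⟨?_, ?_⟩
  · ext i j
    have hc : (starRingEnd ℂ) (C j i) = C i j := by
      have := hC.1.apply i j
      simpa [Matrix.conjTranspose_apply] using this
    simp only [Matrix.conjTranspose_apply, Matrix.of_apply, RCLike.star_def, map_mul,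
      map_sum, Complex.conj_conj]
    rw [hc]
    congr 1
    exact Finset.sum_congr rfl fun k _ => mul_comm _ _
  · intro v
    have key : dotProduct (star v) (Matrix.mulVec (Matrix.of fun i j =>
        (∑ k, F i k * (starRingEnd ℂ) (F j k)) * C i j) v)
        = ∑ k : ι, dotProduct (star (fun j => v j * (starRingEnd ℂ) (F j k)))
            (Matrix.mulVec C (fun j => v j * (starRingEnd ℂ) (F j k))) := by
      simp only [dotProduct, Matrix.mulVec, Matrix.of_apply, Pi.star_apply,
        Finset.mul_sum, Finset.sum_mul, RCLike.star_def, map_mul, Complex.conj_conj]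
      conv_rhs => rw [Finset.sum_comm]
      refine Finset.sum_congr rfl fun i _ => ?_
      rw [Finset.sum_comm]
      refine Finset.sum_congr rfl fun j _ => ?_
      refine Finset.sum_congr rfl fun k _ => ?_
      ring
    rw [key]
    exact Finset.sum_nonneg fun k _ => hC.dotProduct_mulVec_nonneg _

lemma inner_pow_gram {m p n : ℕ} (x : Fin p → EuclideanSpace ℂ (Fin m)) (i j : Fin p) :
    (⟪x j, x i⟫_ℂ) ^ n
      = ∑ k : Fin n → Fin m, (∏ l, x i (k l)) * (starRingEnd ℂ) (∏ l, x j (k l)) := by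
  have h1 : (⟪x j, x i⟫_ℂ) = ∑ k, (starRingEnd ℂ) (x j k) * x i k := by
    simp [PiLp.inner_apply]
    exact Finset.sum_congr rfl fun _ _ => mul_comm _ _
  rw [h1, ← Fin.prod_const n, Finset.prod_univ_sum, Fintype.piFinset_univ]
  refine Finset.sum_congr rfl fun k _ => ?_
  rw [Finset.prod_mul_distrib, map_prod]
  ring

/-- Let `K` be a sesqui-analytic positive definite kernel on the unit ball `𝔹ᵐ ⊆ ℂᵐ`
normalized at the origin, and suppose `B_m⁻¹·K ⪰ 0`, where
`B_m(z,w) = 1/(1 − ⟨z,w⟩)` is the Drury–Arveson kernel.  Then `K − B_m ⪰ 0` on `𝔹ᵐ`. -/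
theorem stmt_13 (m : ℕ)
    (K : EuclideanSpace ℂ (Fin m) → EuclideanSpace ℂ (Fin m) → ℂ)
    (hs : Sesq (Metric.ball (0 : EuclideanSpace ℂ (Fin m)) 1) K)
    (hK : IsPDOn (Metric.ball (0 : EuclideanSpace ℂ (Fin m)) 1) K)
    (hnorm : ∀ z ∈ Metric.ball (0 : EuclideanSpace ℂ (Fin m)) 1, K z 0 = 1)
    (hrow : IsNNDOn (Metric.ball (0 : EuclideanSpace ℂ (Fin m)) 1)
      (fun z w => (1 - ⟪w, z⟫_ℂ) * K z w)) :
    IsNNDOn (Metric.ball (0 : EuclideanSpace ℂ (Fin m)) 1)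
      (fun z w => K z w - (1 - ⟪w, z⟫_ℂ)⁻¹) := by
  set s : Set (EuclideanSpace ℂ (Fin m)) := Metric.ball 0 1 with hsdef
  have h0s : (0 : EuclideanSpace ℂ (Fin m)) ∈ s := by
    simp [hsdef]
  -- K 0 w = 1 for all w in the ball
  have hK0 : ∀ w ∈ s, K 0 w = 1 := by
    intro w hw
    by_cases hw0 : w = 0
    · rw [hw0]; exact hnorm 0 h0s
    · have hinj : Function.Injective (![w, 0] : Fin 2 → EuclideanSpace ℂ (Fin m)) := by
        intro a b hab
        fin_cases a <;> fin_cases b <;> simp_all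
      have hmem : ∀ i, (![w, 0] : Fin 2 → EuclideanSpace ℂ (Fin m)) i ∈ s := by
        intro i; fin_cases i <;> simpa
      have hpd := (hK 2 ![w, 0] hmem hinj).1
      have := hpd.apply 1 0
      simp only [Matrix.conjTranspose_apply, Matrix.of_apply] at this
      simp only [Matrix.cons_val_one, Matrix.head_cons, Matrix.cons_val_zero] at this
      rw [hnorm w hw] at this
      rw [← this]
      simp
  intro p x hx
  -- the Gram entries
  set a : Fin p → Fin p → ℂ := fun i j => ⟪x j, x i⟫_ℂ with ha
  have hanorm : ∀ i j, ‖a i j‖ < 1 := by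
    intro i j
    have h1 := norm_inner_le_norm (𝕜 := ℂ) (x j) (x i)
    have h2 : ‖x i‖ < 1 := by have := hx i; simpa [hsdef, Metric.mem_ball, dist_eq_norm] using this
    have h3 : ‖x j‖ < 1 := by have := hx j; simpa [hsdef, Metric.mem_ball, dist_eq_norm] using this
    calc ‖a i j‖ ≤ ‖x j‖ * ‖x i‖ := h1
    _ < 1 := by nlinarith [norm_nonneg (x i), norm_nonneg (x j)]
  have hane : ∀ i j, (1 : ℂ) - a i j ≠ 0 := by
    intro i j h
    have h1 : a i j = 1 := by linear_combination -h
    have h2 := hanorm i j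
    rw [h1] at h2
    simp at h2
  -- the shifted kernel matrix D = L - 1
  set D : Matrix (Fin p) (Fin p) ℂ :=
    Matrix.of (fun i j => (1 - a i j) * K (x i) (x j) - 1) with hD
  -- L matrix on x
  have hL := hrow p x hx
  have hDherm : D.IsHermitian := by
    have hones : (Matrix.of fun _ _ : Fin p => (1 : ℂ)).IsHermitian := by
      ext i j; simp
    have := hL.1.sub hones
    convert this using 2
    ext i j; simp [hD, ha]
  have hDpsd : D.PosSemidef := by
    refine Matrix.PosSemidef.of_dotProduct_mulVec_nonneg hDherm ?_
    intro v
    -- augmented family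
    set y : Fin (p + 1) → EuclideanSpace ℂ (Fin m) := Fin.snoc x 0 with hy
    have hymem : ∀ i, y i ∈ s := by
      intro i
      refine Fin.lastCases ?_ ?_ i
      · simp [hy, h0s]
      · intro k; simp only [hy, Fin.snoc_castSucc]; exact hx k
    have hMy := (hrow (p + 1) y hymem).dotProduct_mulVec_nonneg
    set u : Fin (p + 1) → ℂ := Fin.snoc v (-∑ i, v i) with hu
    have := hMy u
    have hcomp : dotProduct (star u) (Matrix.mulVec
        (Matrix.of fun i j : Fin (p+1) => (1 - ⟪y j, y i⟫_ℂ) * K (y i) (y j)) u)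
        = dotProduct (star v) (Matrix.mulVec D v) := by
      simp only [dotProduct, Matrix.mulVec, Matrix.of_apply, Pi.star_apply,
        RCLike.star_def]
      simp only [Fin.sum_univ_castSucc]
      simp only [hy, hu, Fin.snoc_castSucc, Fin.snoc_last]
      have hKi0 : ∀ i : Fin p, K (x i) 0 = 1 := fun i => hnorm (x i) (hx i)
      have hK0j : ∀ j : Fin p, K 0 (x j) = 1 := fun j => hK0 (x j) (hx j)
      simp only [inner_zero_left, inner_zero_right, sub_zero, one_mul, hKi0, hK0j,
        hnorm 0 h0s, mul_one]
      simp only [hD, Matrix.of_apply, ha]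
      set S := ∑ j, v j with hS
      rw [add_neg_cancel S, mul_zero, add_zero]
      refine Finset.sum_congr rfl fun i _ => ?_
      congr 1
      have hinner : ∀ j, ((1 - ⟪x j, x i⟫_ℂ) * K (x i) (x j) - 1) * v j
          = (1 - ⟪x j, x i⟫_ℂ) * K (x i) (x j) * v j - v j := by
        intro j; ring
      rw [Finset.sum_congr rfl fun j _ => hinner j, Finset.sum_sub_distrib, ← hS,
        sub_eq_add_neg]
    rw [← hcomp]
    exact this
  -- the target matrix equals the Hadamard-type series
  have hB : ∀ i j, (1 - a i j)⁻¹ = ∑' n : ℕ, (a i j) ^ n :=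
    fun i j => (tsum_geometric_of_norm_lt_one (hanorm i j)).symm
  have hentry : ∀ i j, K (x i) (x j) - (1 - a i j)⁻¹ = (1 - a i j)⁻¹ * D i j := by
    intro i j
    rw [hD, Matrix.of_apply]
    field_simp [hane i j]
  refine Matrix.posSemidef_iff_dotProduct_mulVec.mpr ⟨?_, ?_⟩
  · -- Hermitian
    ext i j
    simp only [Matrix.conjTranspose_apply, Matrix.of_apply, RCLike.star_def]
    rw [show K (x j) (x i) - (1 - ⟪x i, x j⟫_ℂ)⁻¹ = (1 - a j i)⁻¹ * D j i from hentry j i,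
      show K (x i) (x j) - (1 - ⟪x j, x i⟫_ℂ)⁻¹ = (1 - a i j)⁻¹ * D i j from hentry i j]
    have h1 : (starRingEnd ℂ) (D j i) = D i j := by
      have := hDherm.apply i j
      simpa [Matrix.conjTranspose_apply] using this
    have h2 : (starRingEnd ℂ) ((1 - a j i)⁻¹) = (1 - a i j)⁻¹ := by
      rw [map_inv₀, map_sub, map_one, ha]
      simp only [inner_conj_symm]
    rw [map_mul, h1, h2]
  · intro v
    -- the quadratic form as a tsum
    have hterm : ∀ i j, (starRingEnd ℂ) (v i) * ((K (x i) (x j) - (1 - a i j)⁻¹) * v j)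
        = ∑' n : ℕ, (starRingEnd ℂ) (v i) * ((a i j) ^ n * D i j * v j) := by
      intro i j
      rw [hentry i j, hB i j, ← tsum_mul_right, ← tsum_mul_right, ← tsum_mul_left]
    have hsummable : ∀ i j : Fin p, Summable
        (fun n : ℕ => (starRingEnd ℂ) (v i) * ((a i j) ^ n * D i j * v j)) := by
      intro i j
      have := summable_geometric_of_norm_lt_one (hanorm i j)
      have h1 : Summable (fun n : ℕ => (a i j) ^ n * (D i j * v j)) := this.mul_right _
      have h2 := h1.mul_left ((starRingEnd ℂ) (v i))
      refine h2.congr fun n => ?_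
      ring
    have hQF : dotProduct (star v) (Matrix.mulVec
        (Matrix.of fun i j => K (x i) (x j) - (1 - ⟪x j, x i⟫_ℂ)⁻¹) v)
        = ∑' n : ℕ, ∑ i, ∑ j,
            (starRingEnd ℂ) (v i) * ((a i j) ^ n * D i j * v j) := by
      simp only [dotProduct, Matrix.mulVec, Matrix.of_apply, Pi.star_apply,
        RCLike.star_def, Finset.mul_sum]
      have h1 : ∀ i : Fin p, ∑ j, (starRingEnd ℂ) (v i) * ((K (x i) (x j) - (1 - ⟪x j, x i⟫_ℂ)⁻¹) * v j)
          = ∑' n : ℕ, ∑ j, (starRingEnd ℂ) (v i) * ((a i j) ^ n * D i j * v j) := by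
        intro i
        rw [Summable.tsum_finsetSum (fun j _ => hsummable i j)]
        exact Finset.sum_congr rfl fun j _ => hterm i j
      rw [Summable.tsum_finsetSum (fun i _ => summable_sum fun j _ => hsummable i j)]
      exact Finset.sum_congr rfl fun i _ => h1 i
    rw [hQF]
    refine tsum_nonneg fun n => ?_
    -- each term is the QF of a PSD Hadamard-Gram matrix
    have hpsd := hadamard_gram_psd (ι := Fin n → Fin m)
      (fun i k => ∏ l, x i (k l)) hDpsd
    have := hpsd.dotProduct_mulVec_nonneg v
    have heq : dotProduct (star v) (Matrix.mulVec (Matrix.of fun i j =>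
        (∑ k : Fin n → Fin m, (∏ l, x i (k l)) * (starRingEnd ℂ) (∏ l, x j (k l))) * D i j) v)
        = ∑ i, ∑ j, (starRingEnd ℂ) (v i) * ((a i j) ^ n * D i j * v j) := by
      simp only [dotProduct, Matrix.mulVec, Matrix.of_apply, Pi.star_apply,
        RCLike.star_def, Finset.mul_sum]
      refine Finset.sum_congr rfl fun i _ => Finset.sum_congr rfl fun j _ => ?_
      rw [ha]
      rw [inner_pow_gram x i j]
    rw [← heq]
    exact this
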